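/- arXiv:2501.03189 — 2 statements merged into one kernel-verified Lean document; each statement's English description precedes it below -/
import Mathlib

section
/- Σ_{m,n≥0} q^{2·C(m+1,2)+C(n+1,2)+mn} / ((q;q)_m (q;q)_n) = (q⁴;q⁴)_∞ / (q;q)_∞ as formal power series in q. -/
noncomputable section

/-- The coefficient-wise (product) topology on `ℚ[[q]]`, so that the infinite
sums and products of formal power series below make sense. -/
instance : TopologicalSpace (PowerSeries ℚ) :=
  TopologicalSpace.induced (fun f => fun n => (PowerSeries.coeff (R := ℚ) n) f) inferInstance

/-- The formal variable `q`. -/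
def q : PowerSeries ℚ := PowerSeries.X

/-- The finite q-Pochhammer symbol `(a; b)_n = ∏_{j=1}^n (1 - a b^(j-1))`. -/
def poch (a b : PowerSeries ℚ) (n : ℕ) : PowerSeries ℚ :=
  ∏ j ∈ Finset.range n, (1 - a * b ^ j)

/-- The infinite q-Pochhammer symbol `(a; b)_∞ = ∏_{j≥1} (1 - a b^(j-1))`. -/
def pochInf (a b : PowerSeries ℚ) : PowerSeries ℚ := ∏' j : ℕ, (1 - a * b ^ j)

namespace Aux

open PowerSeries Finset Filter Topology

abbrev R := PowerSeries ℚ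

def φ : R → (ℕ → ℚ) := fun f n => (PowerSeries.coeff (R := ℚ) n) f

lemma isInducing_phi : Topology.IsInducing φ := ⟨rfl⟩

lemma tendsto_coeff {γ : Type*} {g : γ → R} {l : Filter γ} {S : R}
    (h : ∀ n, ∀ᶠ x in l, (PowerSeries.coeff (R := ℚ) n) (g x) = (PowerSeries.coeff (R := ℚ) n) S) :
    Filter.Tendsto g l (nhds S) := by
  rw [isInducing_phi.tendsto_nhds_iff, tendsto_pi_nhds]
  intro n
  exact Filter.Tendsto.congr' ((h n).mono fun x hx => hx.symm) tendsto_const_nhds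

instance : T2Space R :=
  Topology.IsEmbedding.t2Space
    (⟨isInducing_phi, fun f g h => PowerSeries.ext fun n => congrFun h n⟩ :
      Topology.IsEmbedding φ)

lemma coeff_mul_congr {n : ℕ} {A B B' : R}
    (h : ∀ k ≤ n, PowerSeries.coeff (R := ℚ) k B = PowerSeries.coeff (R := ℚ) k B') :
    PowerSeries.coeff (R := ℚ) n (A * B) = PowerSeries.coeff (R := ℚ) n (A * B') := by
  rw [PowerSeries.coeff_mul, PowerSeries.coeff_mul]
  refine Finset.sum_congr rfl fun p hp => ?_
  rw [Finset.HasAntidiagonal.mem_antidiagonal] at hp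
  rw [h p.2 (by omega)]

lemma coeff_mul_congr' {n : ℕ} {A A' B : R}
    (h : ∀ k ≤ n, PowerSeries.coeff (R := ℚ) k A = PowerSeries.coeff (R := ℚ) k A') :
    PowerSeries.coeff (R := ℚ) n (A * B) = PowerSeries.coeff (R := ℚ) n (A' * B) := by
  rw [mul_comm A, mul_comm A']; exact coeff_mul_congr h

/-- `B` agrees with `1` in coefficients `≤ n`. -/
def One' (n : ℕ) (B : R) : Prop := ∀ k ≤ n, PowerSeries.coeff (R := ℚ) k B = PowerSeries.coeff (R := ℚ) k 1

lemma one'_mono {m n : ℕ} {B : R} (h : m ≤ n) (hB : One' n B) : One' m B :=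
  fun k hk => hB k (hk.trans h)

lemma one'_one (n : ℕ) : One' n 1 := fun _ _ => rfl

lemma coeff_mul_one_right {n : ℕ} {A B : R} (h : One' n B) :
    PowerSeries.coeff (R := ℚ) n (A * B) = PowerSeries.coeff (R := ℚ) n A := by
  rw [coeff_mul_congr h, mul_one]

lemma one'_mul {n : ℕ} {A B : R} (hA : One' n A) (hB : One' n B) : One' n (A * B) := by
  intro k hk
  rw [coeff_mul_congr (fun j hj => hB j (hj.trans hk)), mul_one, hA k hk]

lemma coeff_q_pow (k E : ℕ) :
    PowerSeries.coeff (R := ℚ) k (q ^ E) = if k = E then 1 else 0 := by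
  rw [q]; exact PowerSeries.coeff_X_pow k E

lemma coeff_q_pow_mul {k E : ℕ} (A : R) (h : k < E) :
    PowerSeries.coeff (R := ℚ) k (q ^ E * A) = 0 := by
  rw [PowerSeries.coeff_mul]
  apply Finset.sum_eq_zero
  intro p hp
  rw [Finset.HasAntidiagonal.mem_antidiagonal] at hp
  rw [coeff_q_pow, if_neg (by omega), zero_mul]

lemma one'_one_add_pow {n E : ℕ} (h : n < E) : One' n (1 + q ^ E) := by
  intro k hk
  rw [map_add, coeff_q_pow, if_neg (by omega), add_zero]

lemma one'_one_sub_pow {n E : ℕ} (h : n < E) : One' n (1 - q ^ E) := by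
  intro k hk
  rw [map_sub, coeff_q_pow, if_neg (by omega), sub_zero]

lemma le_mul_left (m d : ℕ) (hd : 0 < d) : m ≤ d * m := by
  calc m = 1 * m := (one_mul m).symm
    _ ≤ d * m := Nat.mul_le_mul_right m hd

/-! ### Infinite products via coefficient stabilization -/

def limProd (f : ℕ → R) : R :=
  PowerSeries.mk fun n => PowerSeries.coeff (R := ℚ) n (∏ j ∈ Finset.range (n + 1), f j)

lemma limProd_congr {f g : ℕ → R} (h : ∀ j, f j = g j) : limProd f = limProd g := by
  have : f = g := funext h
  rw [this]

def Tail (f : ℕ → R) : Prop := ∀ j, One' j (f j)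

lemma one'_prod {f : ℕ → R} (hf : Tail f) {n : ℕ} {s : Finset ℕ}
    (hs : ∀ j ∈ s, n < j) : One' n (∏ j ∈ s, f j) := by
  classical
  induction s using Finset.induction_on with
  | empty => rw [Finset.prod_empty]; exact one'_one n
  | @insert a s' ha ih =>
    rw [Finset.prod_insert ha]
    exact one'_mul (one'_mono (le_of_lt (hs a (Finset.mem_insert_self a s')))
      (hf a)) (ih fun j hj => hs j (Finset.mem_insert_of_mem hj))

lemma coeff_prod_stable {f : ℕ → R} (hf : Tail f) {n : ℕ} {s : Finset ℕ}
    (hs : Finset.range (n + 1) ⊆ s) :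
    PowerSeries.coeff (R := ℚ) n (∏ j ∈ s, f j) = PowerSeries.coeff (R := ℚ) n (limProd f) := by
  rw [limProd, PowerSeries.coeff_mk]
  rw [← Finset.prod_sdiff hs, mul_comm]
  exact coeff_mul_one_right (one'_prod hf (fun j hj => by
    rw [Finset.mem_sdiff, Finset.mem_range] at hj; omega))

lemma coeff_limProd_stable {f : ℕ → R} (hf : Tail f) {k n : ℕ} (hk : k ≤ n) :
    PowerSeries.coeff (R := ℚ) k (limProd f)
      = PowerSeries.coeff (R := ℚ) k (∏ j ∈ Finset.range (n + 1), f j) :=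
  (coeff_prod_stable hf (Finset.range_subset_range.2 (by omega))).symm

lemma hasProd_limProd {f : ℕ → R} (hf : Tail f) : HasProd f (limProd f) := by
  apply tendsto_coeff
  intro n
  exact Filter.eventually_atTop.2 ⟨Finset.range (n + 1),
    fun s hs => coeff_prod_stable hf hs⟩

lemma limProd_mul {f g : ℕ → R} (hf : Tail f) (hg : Tail g) :
    limProd f * limProd g = limProd (fun j => f j * g j) := by
  ext n
  rw [coeff_mul_congr (fun k hk => coeff_limProd_stable hg hk),
    coeff_mul_congr' (fun k hk => coeff_limProd_stable hf hk),
    ← Finset.prod_mul_distrib]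
  rw [limProd, PowerSeries.coeff_mk]

lemma limProd_shift {f : ℕ → R} (hf : Tail f) (m : ℕ) :
    limProd f = (∏ j ∈ Finset.range m, f j) * limProd (fun j => f (m + j)) := by
  have hf' : Tail (fun j => f (m + j)) := fun j k hk => hf (m + j) k (by omega)
  ext n
  rw [coeff_mul_congr (fun k hk => coeff_limProd_stable hf' hk),
    ← Finset.prod_range_add]
  exact (coeff_prod_stable hf (Finset.range_subset_range.2 (by omega))).symm

/-! ### Infinite sums via coefficient stabilization -/

def limSum (F : ℕ → R) : R :=
  PowerSeries.mk fun n => PowerSeries.coeff (R := ℚ) n (∑ j ∈ Finset.range (n + 1), F j)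

def Vanish (F : ℕ → R) : Prop := ∀ j k, k < j → PowerSeries.coeff (R := ℚ) k (F j) = 0

lemma coeff_sum_stable {F : ℕ → R} (hF : Vanish F) {n : ℕ} {s : Finset ℕ}
    (hs : Finset.range (n + 1) ⊆ s) :
    PowerSeries.coeff (R := ℚ) n (∑ j ∈ s, F j) = PowerSeries.coeff (R := ℚ) n (limSum F) := by
  rw [limSum, PowerSeries.coeff_mk, map_sum, map_sum]
  exact (Finset.sum_subset hs (fun j _ hj' => hF j n (by
    rw [Finset.mem_range] at hj'; omega))).symm

lemma hasSum_limSum {F : ℕ → R} (hF : Vanish F) : HasSum F (limSum F) := by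
  apply tendsto_coeff
  intro n
  exact Filter.eventually_atTop.2 ⟨Finset.range (n + 1),
    fun s hs => coeff_sum_stable hF hs⟩

/-! ### poch facts -/

lemma qpow_mul_qpow (c j : ℕ) : q ^ c * (q ^ c) ^ j = q ^ (c * (j + 1)) := by
  rw [← pow_mul, ← pow_add]
  congr 1
  ring

lemma poch_succ (a b : PowerSeries ℚ) (n : ℕ) :
    poch a b (n + 1) = poch a b n * (1 - a * b ^ n) := Finset.prod_range_succ _ n

lemma constCoeff_poch (d m : ℕ) (hd : 0 < d) :
    PowerSeries.constantCoeff (R := ℚ) (poch (q ^ d) (q ^ d) m) = 1 := by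
  rw [poch, map_prod]
  apply Finset.prod_eq_one
  intro j _
  rw [map_sub, map_one, map_mul, map_pow, map_pow, q, PowerSeries.constantCoeff_X,
    zero_pow (by omega), zero_mul, sub_zero]

lemma poch_ne (d m : ℕ) (hd : 0 < d) : poch (q ^ d) (q ^ d) m ≠ 0 := by
  intro h
  have h2 := constCoeff_poch d m hd
  rw [h, map_zero] at h2
  exact zero_ne_one h2

lemma poch_mul_inv (d m : ℕ) (hd : 0 < d) :
    poch (q ^ d) (q ^ d) m * (poch (q ^ d) (q ^ d) m)⁻¹ = 1 :=
  PowerSeries.mul_inv_cancel _ (by rw [constCoeff_poch d m hd]; exact one_ne_zero)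

/-! ### Euler's identity -/

def Fe (d a m : ℕ) : R :=
  q ^ (d * (m + 1).choose 2 + a * m) * (poch (q ^ d) (q ^ d) m)⁻¹

lemma choose_two_succ (m : ℕ) : (m + 1 + 1).choose 2 = (m + 1).choose 2 + (m + 1) := by
  have h : (m + 1 + 1).choose 2 = (m + 1).choose 1 + (m + 1).choose 2 :=
    Nat.choose_succ_succ (m + 1) 1
  rw [h, Nat.choose_one_right]
  omega

lemma choose_two_ge (m : ℕ) : m ≤ (m + 1).choose 2 := by
  induction m with
  | zero => simp
  | succ m ih =>
    rw [choose_two_succ]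
    omega

lemma vanish_Fe (d a : ℕ) (hd : 0 < d) : Vanish (Fe d a) := by
  intro m k hk
  apply coeff_q_pow_mul
  have h1 := choose_two_ge m
  have h2 : (m + 1).choose 2 ≤ d * (m + 1).choose 2 := le_mul_left _ d hd
  omega

lemma Fe_zero (d a : ℕ) : Fe d a 0 = 1 := by
  have h1 : (0 + 1).choose 2 = 0 := by decide
  have h : d * (0 + 1).choose 2 + a * 0 = 0 := by rw [h1]; ring
  rw [Fe, h, pow_zero, poch, Finset.prod_range_zero, inv_one, one_mul]

lemma Fe_succ (d a m : ℕ) (hd : 0 < d) :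
    Fe d a (m + 1) = Fe d (a + d) (m + 1) + q ^ (a + d) * Fe d (a + d) m := by
  apply mul_right_cancel₀ (poch_ne d (m + 1) hd)
  have h1 : (poch (q ^ d) (q ^ d) (m + 1))⁻¹ * poch (q ^ d) (q ^ d) (m + 1) = 1 := by
    rw [mul_comm]; exact poch_mul_inv d (m + 1) hd
  have h2 : (poch (q ^ d) (q ^ d) m)⁻¹ * poch (q ^ d) (q ^ d) (m + 1)
      = 1 - q ^ (d * (m + 1)) := by
    rw [poch_succ, ← mul_assoc, mul_comm ((poch (q ^ d) (q ^ d) m)⁻¹),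
      poch_mul_inv d m hd, one_mul, qpow_mul_qpow]
  rw [Fe, Fe, Fe, choose_two_succ]
  linear_combination (q ^ (d * ((m + 1).choose 2 + (m + 1)) + a * (m + 1))
      - q ^ (d * ((m + 1).choose 2 + (m + 1)) + (a + d) * (m + 1))) * h1
    - (q ^ (a + d) * q ^ (d * (m + 1).choose 2 + (a + d) * m)) * h2

lemma FE_finite (d a : ℕ) (hd : 0 < d) (M : ℕ) :
    (∑ m ∈ Finset.range (M + 1), Fe d a m) + q ^ (a + d) * Fe d (a + d) M
      = (1 + q ^ (a + d)) * ∑ m ∈ Finset.range (M + 1), Fe d (a + d) m := by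
  induction M with
  | zero =>
    rw [Finset.sum_range_one, Finset.sum_range_one, Fe_zero, Fe_zero]
    ring
  | succ M ih =>
    rw [Finset.sum_range_succ, Finset.sum_range_succ (Fe d (a + d)),
      Fe_succ d a M hd]
    linear_combination ih

def fE (d a : ℕ) : R := limSum (Fe d a)

lemma fE_step (d a : ℕ) (hd : 0 < d) : fE d a = (1 + q ^ (a + d)) * fE d (a + d) := by
  ext k
  rw [fE, limSum, PowerSeries.coeff_mk]
  have hb : PowerSeries.coeff (R := ℚ) k (q ^ (a + d) * Fe d (a + d) k) = 0 := by
    rw [Fe, ← mul_assoc, ← pow_add]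
    apply coeff_q_pow_mul
    have h1 := choose_two_ge k
    have h2 : (k + 1).choose 2 ≤ d * (k + 1).choose 2 := le_mul_left _ d hd
    omega
  have h2 := FE_finite d a hd k
  have h3 : PowerSeries.coeff (R := ℚ) k (∑ m ∈ Finset.range (k + 1), Fe d a m)
      = PowerSeries.coeff (R := ℚ) k
          ((1 + q ^ (a + d)) * ∑ m ∈ Finset.range (k + 1), Fe d (a + d) m) := by
    rw [← h2, map_add, hb, add_zero]
  rw [h3]
  exact coeff_mul_congr (fun j hj =>
    coeff_sum_stable (vanish_Fe d (a + d) hd) (Finset.range_subset_range.2 (by omega)))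

lemma fE_iterate (d a : ℕ) (hd : 0 < d) (t : ℕ) :
    fE d a = (∏ j ∈ Finset.range t, (1 + q ^ (a + d * (j + 1)))) * fE d (a + d * t) := by
  induction t with
  | zero => simp
  | succ t ih =>
    rw [ih, fE_step d (a + d * t) hd, Finset.prod_range_succ]
    have he : a + d * t + d = a + d * (t + 1) := by ring
    rw [he]
    ring

lemma one'_fE (d b n : ℕ) (hd : 0 < d) (hb : n < b) : One' n (fE d b) := by
  intro k hk
  rw [fE, limSum, PowerSeries.coeff_mk, Finset.sum_range_succ', Fe_zero, map_add]
  have hz : PowerSeries.coeff (R := ℚ) k (∑ i ∈ Finset.range k, Fe d b (i + 1)) = 0 := by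
    rw [map_sum]
    apply Finset.sum_eq_zero
    intro i _
    apply coeff_q_pow_mul
    have h3 : b ≤ b * (i + 1) := by
      calc b = b * 1 := (mul_one b).symm
        _ ≤ b * (i + 1) := Nat.mul_le_mul_left b (by omega)
    omega
  rw [hz, zero_add]

lemma euler (d a : ℕ) (hd : 0 < d) :
    fE d a = limProd (fun j => 1 + q ^ (a + d * (j + 1))) := by
  ext n
  rw [fE_iterate d a hd (n + 1)]
  have h1 : One' n (fE d (a + d * (n + 1))) := by
    apply one'_fE d _ n hd
    have : n + 1 ≤ d * (n + 1) := le_mul_left _ d hd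
    omega
  rw [coeff_mul_one_right h1, limProd, PowerSeries.coeff_mk]

/-! ### Named products -/

def E0 : R := limProd (fun j => 1 + q ^ (j + 1))
def E2 : R := limProd (fun j => 1 + q ^ (2 * (j + 1)))
def P1 : R := limProd (fun j => 1 - q ^ (j + 1))
def P2 : R := limProd (fun j => 1 - q ^ (2 * (j + 1)))
def P4 : R := limProd (fun j => 1 - q ^ (4 * (j + 1)))

lemma tail_add (c : ℕ) (hc : 0 < c) : Tail (fun j => 1 + q ^ (c * (j + 1))) := by
  intro j
  apply one'_one_add_pow
  have : j + 1 ≤ c * (j + 1) := le_mul_left _ c hc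
  omega

lemma tail_sub (c : ℕ) (hc : 0 < c) : Tail (fun j => 1 - q ^ (c * (j + 1))) := by
  intro j
  apply one'_one_sub_pow
  have : j + 1 ≤ c * (j + 1) := le_mul_left _ c hc
  omega

lemma tail_add_one : Tail (fun j => 1 + q ^ (j + 1)) := fun j =>
  one'_one_add_pow (by omega)

lemma tail_sub_one : Tail (fun j => 1 - q ^ (j + 1)) := fun j =>
  one'_one_sub_pow (by omega)

lemma hE0 : fE 1 0 = E0 := by
  rw [euler 1 0 one_pos, E0]
  simp only [zero_add, one_mul]

lemma hE2 : fE 2 0 = E2 := by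
  rw [euler 2 0 two_pos, E2]
  simp only [zero_add]

lemma hEm (m : ℕ) : fE 1 m = limProd (fun j => 1 + q ^ (m + (j + 1))) := by
  rw [euler 1 m one_pos]
  simp only [one_mul]

def Epart (m : ℕ) : R := ∏ j ∈ Finset.range m, (1 + q ^ (j + 1))

lemma fE1_mul_Epart (m : ℕ) : fE 1 m * Epart m = E0 := by
  rw [hEm m, Epart, mul_comm, E0, limProd_shift tail_add_one m]
  congr 1

lemma constCoeff_Epart (m : ℕ) : PowerSeries.constantCoeff (R := ℚ) (Epart m) = 1 := by
  rw [Epart, map_prod]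
  apply Finset.prod_eq_one
  intro j _
  rw [map_add, map_one, map_pow, q, PowerSeries.constantCoeff_X, zero_pow (by omega),
    add_zero]

lemma Epart_mul_inv (m : ℕ) : Epart m * (Epart m)⁻¹ = 1 :=
  PowerSeries.mul_inv_cancel _ (by rw [constCoeff_Epart]; exact one_ne_zero)

lemma fE1_eq (m : ℕ) : fE 1 m = E0 * (Epart m)⁻¹ := by
  calc fE 1 m = fE 1 m * (Epart m * (Epart m)⁻¹) := by rw [Epart_mul_inv, mul_one]
    _ = (fE 1 m * Epart m) * (Epart m)⁻¹ := by ring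
    _ = E0 * (Epart m)⁻¹ := by rw [fE1_mul_Epart]

lemma poch_qq (m : ℕ) : poch q q m = ∏ j ∈ Finset.range m, (1 - q ^ (j + 1)) := by
  rw [poch]
  refine Finset.prod_congr rfl fun j _ => ?_
  rw [← pow_succ' q j]

lemma poch_q2 (m : ℕ) :
    poch (q ^ 2) (q ^ 2) m = ∏ j ∈ Finset.range m, (1 - q ^ (2 * (j + 1))) := by
  rw [poch]
  refine Finset.prod_congr rfl fun j _ => ?_
  rw [qpow_mul_qpow]

lemma poch_mul_Epart (m : ℕ) : poch q q m * Epart m = poch (q ^ 2) (q ^ 2) m := by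
  rw [poch_qq, Epart, poch_q2, ← Finset.prod_mul_distrib]
  refine Finset.prod_congr rfl fun j _ => ?_
  have hh : q ^ (j + 1) * q ^ (j + 1) = q ^ (2 * (j + 1)) := by
    rw [← pow_add]; congr 1; ring
  calc (1 - q ^ (j + 1)) * (1 + q ^ (j + 1))
      = 1 - q ^ (j + 1) * q ^ (j + 1) := by ring
    _ = 1 - q ^ (2 * (j + 1)) := by rw [hh]

lemma poch_inv_mul_Epart_inv (m : ℕ) :
    (poch q q m)⁻¹ * (Epart m)⁻¹ = (poch (q ^ 2) (q ^ 2) m)⁻¹ := by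
  rw [← poch_mul_Epart, PowerSeries.mul_inv_rev, mul_comm]

lemma Fe1_eq (m n : ℕ) :
    Fe 1 m n = q ^ ((n + 1).choose 2 + m * n) * (poch q q n)⁻¹ := by
  rw [Fe, pow_one, one_mul]

lemma key_G (m : ℕ) :
    q ^ (2 * (m + 1).choose 2) * (poch q q m)⁻¹ * fE 1 m = E0 * Fe 2 0 m := by
  rw [fE1_eq m, Fe]
  have he : 2 * (m + 1).choose 2 + 0 * m = 2 * (m + 1).choose 2 := by ring
  rw [he, ← poch_inv_mul_Epart_inv]
  ring

/-! ### The double sum -/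

lemma hasSum_big :
    HasSum (fun p : ℕ × ℕ =>
        q ^ (2 * (p.1 + 1).choose 2 + (p.2 + 1).choose 2 + p.1 * p.2)
          * (poch q q p.1)⁻¹ * (poch q q p.2)⁻¹)
      (E0 * fE 2 0) := by
  apply tendsto_coeff
  intro k
  refine Filter.eventually_atTop.2 ⟨Finset.range (k + 1) ×ˢ Finset.range (k + 1),
    fun s hs => ?_⟩
  have hvan : ∀ p : ℕ × ℕ, p ∉ Finset.range (k + 1) ×ˢ Finset.range (k + 1) →
      PowerSeries.coeff (R := ℚ) k
        (q ^ (2 * (p.1 + 1).choose 2 + (p.2 + 1).choose 2 + p.1 * p.2)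
          * (poch q q p.1)⁻¹ * (poch q q p.2)⁻¹) = 0 := by
    intro p hp
    rw [mul_assoc]
    apply coeff_q_pow_mul
    rw [Finset.mem_product, Finset.mem_range, Finset.mem_range] at hp
    push_neg at hp
    have h1 := choose_two_ge p.1
    have h2 := choose_two_ge p.2
    by_cases hc : p.1 < k + 1
    · have := hp hc
      omega
    · omega
  have hinner : ∀ m ∈ Finset.range (k + 1),
      (∑ n ∈ Finset.range (k + 1),
        q ^ (2 * (m + 1).choose 2 + (n + 1).choose 2 + m * n)
          * (poch q q m)⁻¹ * (poch q q n)⁻¹)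
      = (q ^ (2 * (m + 1).choose 2) * (poch q q m)⁻¹)
          * ∑ n ∈ Finset.range (k + 1), Fe 1 m n := by
    intro m _
    rw [Finset.mul_sum]
    refine Finset.sum_congr rfl fun n _ => ?_
    rw [Fe1_eq, pow_add, pow_add]
    ring
  have hterm : ∀ m ∈ Finset.range (k + 1),
      PowerSeries.coeff (R := ℚ) k
        ((q ^ (2 * (m + 1).choose 2) * (poch q q m)⁻¹)
          * ∑ n ∈ Finset.range (k + 1), Fe 1 m n)
      = PowerSeries.coeff (R := ℚ) k (E0 * Fe 2 0 m) := by
    intro m _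
    calc PowerSeries.coeff (R := ℚ) k
          ((q ^ (2 * (m + 1).choose 2) * (poch q q m)⁻¹)
            * ∑ n ∈ Finset.range (k + 1), Fe 1 m n)
        = PowerSeries.coeff (R := ℚ) k
            ((q ^ (2 * (m + 1).choose 2) * (poch q q m)⁻¹) * fE 1 m) :=
          coeff_mul_congr (fun j hj =>
            coeff_sum_stable (vanish_Fe 1 m one_pos) (Finset.range_subset_range.2 (by omega)))
      _ = PowerSeries.coeff (R := ℚ) k (E0 * Fe 2 0 m) := by rw [key_G m]
  calc PowerSeries.coeff (R := ℚ) k (∑ p ∈ s,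
        q ^ (2 * (p.1 + 1).choose 2 + (p.2 + 1).choose 2 + p.1 * p.2)
          * (poch q q p.1)⁻¹ * (poch q q p.2)⁻¹)
      = ∑ p ∈ s, PowerSeries.coeff (R := ℚ) k
          (q ^ (2 * (p.1 + 1).choose 2 + (p.2 + 1).choose 2 + p.1 * p.2)
            * (poch q q p.1)⁻¹ * (poch q q p.2)⁻¹) := map_sum _ _ _
    _ = ∑ p ∈ Finset.range (k + 1) ×ˢ Finset.range (k + 1), PowerSeries.coeff (R := ℚ) k
          (q ^ (2 * (p.1 + 1).choose 2 + (p.2 + 1).choose 2 + p.1 * p.2)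
            * (poch q q p.1)⁻¹ * (poch q q p.2)⁻¹) :=
        (Finset.sum_subset hs (fun p _ hp => by rw [hvan p hp])).symm
    _ = PowerSeries.coeff (R := ℚ) k (∑ p ∈ Finset.range (k + 1) ×ˢ Finset.range (k + 1),
          q ^ (2 * (p.1 + 1).choose 2 + (p.2 + 1).choose 2 + p.1 * p.2)
            * (poch q q p.1)⁻¹ * (poch q q p.2)⁻¹) := (map_sum _ _ _).symm
    _ = PowerSeries.coeff (R := ℚ) k (∑ m ∈ Finset.range (k + 1),
          (q ^ (2 * (m + 1).choose 2) * (poch q q m)⁻¹)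
            * ∑ n ∈ Finset.range (k + 1), Fe 1 m n) := by
        rw [Finset.sum_product]
        exact congrArg (PowerSeries.coeff (R := ℚ) k) (Finset.sum_congr rfl hinner)
    _ = ∑ m ∈ Finset.range (k + 1), PowerSeries.coeff (R := ℚ) k
          ((q ^ (2 * (m + 1).choose 2) * (poch q q m)⁻¹)
            * ∑ n ∈ Finset.range (k + 1), Fe 1 m n) := map_sum _ _ _
    _ = ∑ m ∈ Finset.range (k + 1),
          PowerSeries.coeff (R := ℚ) k (E0 * Fe 2 0 m) := Finset.sum_congr rfl hterm
    _ = PowerSeries.coeff (R := ℚ) k (∑ m ∈ Finset.range (k + 1), E0 * Fe 2 0 m) :=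
        (map_sum _ _ _).symm
    _ = PowerSeries.coeff (R := ℚ) k (E0 * ∑ m ∈ Finset.range (k + 1), Fe 2 0 m) := by
        rw [← Finset.mul_sum]
    _ = PowerSeries.coeff (R := ℚ) k (E0 * fE 2 0) :=
        coeff_mul_congr (fun j hj =>
          coeff_sum_stable (vanish_Fe 2 0 two_pos) (Finset.range_subset_range.2 (by omega)))

/-! ### The product side -/

lemma pochInf_qq : pochInf q q = P1 := by
  have h : (fun j : ℕ => 1 - q * q ^ j) = (fun j => 1 - q ^ (j + 1)) := by
    funext j
    rw [← pow_succ' q j]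
  rw [pochInf, h]
  exact (hasProd_limProd tail_sub_one).tprod_eq

lemma pochInf_q4 : pochInf (q ^ 4) (q ^ 4) = P4 := by
  have h : (fun j : ℕ => 1 - q ^ 4 * (q ^ 4) ^ j) = (fun j => 1 - q ^ (4 * (j + 1))) := by
    funext j
    rw [qpow_mul_qpow]
  rw [pochInf, h]
  exact (hasProd_limProd (tail_sub 4 (by omega))).tprod_eq

lemma P1_mul_E0 : P1 * E0 = P2 := by
  rw [P1, E0, limProd_mul tail_sub_one tail_add_one, P2]
  apply limProd_congr
  intro j
  have hh : q ^ (j + 1) * q ^ (j + 1) = q ^ (2 * (j + 1)) := by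
    rw [← pow_add]; congr 1; ring
  calc (1 - q ^ (j + 1)) * (1 + q ^ (j + 1))
      = 1 - q ^ (j + 1) * q ^ (j + 1) := by ring
    _ = 1 - q ^ (2 * (j + 1)) := by rw [hh]

lemma P2_mul_E2 : P2 * E2 = P4 := by
  rw [P2, E2, limProd_mul (tail_sub 2 (by omega)) (tail_add 2 (by omega)), P4]
  apply limProd_congr
  intro j
  have hh : q ^ (2 * (j + 1)) * q ^ (2 * (j + 1)) = q ^ (4 * (j + 1)) := by
    rw [← pow_add]; congr 1; ring
  calc (1 - q ^ (2 * (j + 1))) * (1 + q ^ (2 * (j + 1)))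
      = 1 - q ^ (2 * (j + 1)) * q ^ (2 * (j + 1)) := by ring
    _ = 1 - q ^ (4 * (j + 1)) := by rw [hh]

lemma constCoeff_P1 : PowerSeries.constantCoeff (R := ℚ) P1 = 1 := by
  rw [← PowerSeries.coeff_zero_eq_constantCoeff_apply, P1, limProd,
    PowerSeries.coeff_mk, Finset.prod_range_one,
    PowerSeries.coeff_zero_eq_constantCoeff_apply, map_sub, map_one, map_pow, q,
    PowerSeries.constantCoeff_X, zero_pow (by omega), sub_zero]

lemma P1_mul_inv : P1 * P1⁻¹ = 1 :=
  PowerSeries.mul_inv_cancel _ (by rw [constCoeff_P1]; exact one_ne_zero)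

lemma P4_eq : P4 = P1 * (E0 * E2) := by
  rw [← P2_mul_E2, ← P1_mul_E0]
  ring

end Aux

theorem double_series_eq_product :
    ∑' p : ℕ × ℕ,
        q ^ (2 * (p.1+1).choose 2 + (p.2+1).choose 2 + p.1 * p.2)
          * (poch q q p.1)⁻¹ * (poch q q p.2)⁻¹
      = pochInf (q ^ 4) (q ^ 4) * (pochInf q q)⁻¹ := by
  rw [Aux.hasSum_big.tsum_eq, Aux.pochInf_q4, Aux.pochInf_qq, Aux.P4_eq, Aux.hE2,
    mul_comm Aux.P1 (Aux.E0 * Aux.E2), mul_assoc, Aux.P1_mul_inv, mul_one]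
end
end

section
/- Σ_{m,n≥0} (−1)^n q^{2·C(m+1,2)+2·C(n+1,2)+2mn+m+n} / ((q;q)_m (q²;q²)_n) = Σ_{m,n≥0} q^{8·C(m+1,2)+2·C(n+1,2)+4mn+2n} / ((q⁴;q⁴)_m (q²;q²)_n), i.e. the alternating double series equals an evidently positive double series. -/
noncomputable section

open PowerSeries Finset

lemma isInducing_coeff : Topology.IsInducing
    (fun f : PowerSeries ℚ => fun n => (PowerSeries.coeff (R := ℚ) n) f) := ⟨rfl⟩

instance : T2Space (PowerSeries ℚ) := by
  have h : Topology.IsEmbedding (fun f : PowerSeries ℚ => fun n => (PowerSeries.coeff (R := ℚ) n) f) :=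
    ⟨isInducing_coeff, fun f g h => PowerSeries.ext fun n => congrFun h n⟩
  exact h.t2Space

lemma hasSum_iff_coeff {ι : Type*} (f : ι → PowerSeries ℚ) (S : PowerSeries ℚ) :
    HasSum f S ↔ ∀ N, HasSum (fun i => coeff (R := ℚ) N (f i)) (coeff (R := ℚ) N S) := by
  simp only [HasSum, isInducing_coeff.tendsto_nhds_iff, tendsto_pi_nhds, Function.comp_def,
    map_sum]


-- algebra helpers
lemma poch_succ (a b : PowerSeries ℚ) (n : ℕ) :
    poch a b (n+1) = poch a b n * (1 - a * b ^ n) := Finset.prod_range_succ _ _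

lemma poch_zero (a b : PowerSeries ℚ) : poch a b 0 = 1 := Finset.prod_range_zero _

lemma constQ : constantCoeff (R := ℚ) q = 0 := PowerSeries.constantCoeff_X

lemma cpoch_q (n : ℕ) : constantCoeff (R := ℚ) (poch q q n) = 1 := by
  induction n with
  | zero => simp [poch_zero]
  | succ n ih => simp [poch_succ, ih, constQ]

lemma cpoch_q2 (n : ℕ) : constantCoeff (R := ℚ) (poch (q^2) (q^2) n) = 1 := by
  induction n with
  | zero => simp [poch_zero]
  | succ n ih => simp [poch_succ, ih, constQ]

lemma cpoch_q4 (n : ℕ) : constantCoeff (R := ℚ) (poch (q^4) (q^4) n) = 1 := by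
  induction n with
  | zero => simp [poch_zero]
  | succ n ih => simp [poch_succ, ih, constQ]

def aa (m : ℕ) : PowerSeries ℚ := (poch q q m)⁻¹
def bb (n : ℕ) : PowerSeries ℚ := (poch (q^2) (q^2) n)⁻¹
def AA (m : ℕ) : PowerSeries ℚ := (poch (q^4) (q^4) m)⁻¹

lemma aa_zero : aa 0 = 1 := by simp [aa, poch_zero]
lemma bb_zero : bb 0 = 1 := by simp [bb, poch_zero]
lemma AA_zero : AA 0 = 1 := by simp [AA, poch_zero]

lemma one_sub_pow_ne (k : ℕ) (hk : 0 < k) : (1 - q^k : PowerSeries ℚ) ≠ 0 := by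
  intro h
  have := congrArg (constantCoeff (R := ℚ)) h
  simp [constQ, zero_pow hk.ne'] at this

lemma aa_rel (m : ℕ) : (1 - q^(m+1)) * aa (m+1) = aa m := by
  have e : q * q^m = q^(m+1) := (pow_succ' q m).symm
  have h1 : poch q q (m+1) = poch q q m * (1 - q^(m+1)) := by
    rw [poch_succ, e]
  unfold aa
  rw [h1, PowerSeries.mul_inv_rev, ← mul_assoc,
    PowerSeries.mul_inv_cancel _ (show constantCoeff (R := ℚ) (1 - q^(m+1)) ≠ 0 by
      simp [constQ]), one_mul]

lemma bb_rel (n : ℕ) : (1 - q^(2*(n+1))) * bb (n+1) = bb n := by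
  have e : q^2 * ((q^2:PowerSeries ℚ))^n = q^(2*(n+1)) := by
    rw [← pow_mul, ← pow_add]; congr 1; ring
  have h1 : poch (q^2) (q^2) (n+1) = poch (q^2) (q^2) n * (1 - q^(2*(n+1))) := by
    rw [poch_succ, e]
  unfold bb
  rw [h1, PowerSeries.mul_inv_rev, ← mul_assoc,
    PowerSeries.mul_inv_cancel _ (show constantCoeff (R := ℚ) (1 - q^(2*(n+1))) ≠ 0 by
      simp [constQ]), one_mul]

lemma AA_rel (m : ℕ) : (1 - q^(4*(m+1))) * AA (m+1) = AA m := by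
  have e : q^4 * ((q^4:PowerSeries ℚ))^m = q^(4*(m+1)) := by
    rw [← pow_mul, ← pow_add]; congr 1; ring
  have h1 : poch (q^4) (q^4) (m+1) = poch (q^4) (q^4) m * (1 - q^(4*(m+1))) := by
    rw [poch_succ, e]
  unfold AA
  rw [h1, PowerSeries.mul_inv_rev, ← mul_assoc,
    PowerSeries.mul_inv_cancel _ (show constantCoeff (R := ℚ) (1 - q^(4*(m+1))) ≠ 0 by
      simp [constQ]), one_mul]

lemma rel_a (m : ℕ) : q^(m+1) * aa (m+1) = aa (m+1) - aa m := by
  linear_combination - aa_rel m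

lemma rel_b (n : ℕ) : q^(2*(n+1)) * bb (n+1) = bb (n+1) - bb n := by
  linear_combination - bb_rel n

lemma rel_A (m : ℕ) : q^(4*(m+1)) * AA (m+1) = AA (m+1) - AA m := by
  linear_combination - AA_rel m

lemma rel_a2 (m : ℕ) :
    q^(2*(m+1)) * aa (m+1) = q^(m+1) * aa (m+1) - q * (q^m * aa m) := by
  have e : 2*(m+1) = (m+1)+(m+1) := by ring
  rw [e, pow_add]
  linear_combination (q^(m+1)) * rel_a m

def cc (s : ℕ) : PowerSeries ℚ :=
  ∑ n ∈ Finset.range (s+1), (-1 : PowerSeries ℚ)^n * aa (s-n) * bb n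
def uu (s : ℕ) : PowerSeries ℚ :=
  ∑ n ∈ Finset.range (s+1), (-1 : PowerSeries ℚ)^n * (q^(s-n) * aa (s-n)) * bb n
def vv (s : ℕ) : PowerSeries ℚ :=
  ∑ n ∈ Finset.range (s+1), (-1 : PowerSeries ℚ)^n * (q^(2*(s-n)) * aa (s-n)) * bb n
def dd (s : ℕ) : PowerSeries ℚ :=
  ∑ M ∈ Finset.range (s/2+1), q^(s-2*M) * AA M * bb (s-2*M)
def ww (s : ℕ) : PowerSeries ℚ :=
  ∑ M ∈ Finset.range (s/2+1), (q^(4*M) * AA M) * (q^(s-2*M) * bb (s-2*M))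

lemma uu_succ (s : ℕ) : uu (s+1) = cc (s+1) - cc s := by
  unfold uu cc
  rw [sum_range_succ, sum_range_succ (fun n => (-1 : PowerSeries ℚ)^n * aa (s+1-n) * bb n)]
  have h : ∀ n ∈ range (s+1),
      (-1 : PowerSeries ℚ)^n * (q^(s+1-n) * aa (s+1-n)) * bb n
        = ((-1 : PowerSeries ℚ)^n * aa (s+1-n) * bb n) - ((-1 : PowerSeries ℚ)^n * aa (s-n) * bb n) := by
    intro n hn
    have hn' : n ≤ s := by simpa [Nat.lt_succ_iff] using hn
    have e1 : s+1-n = (s-n)+1 := by omega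
    rw [e1, rel_a (s-n)]
    ring
  rw [sum_congr rfl h, sum_sub_distrib]
  simp only [Nat.sub_self, pow_zero, one_mul]
  ring

lemma vv_succ (s : ℕ) : vv (s+1) = uu (s+1) - q * uu s := by
  unfold vv uu
  rw [sum_range_succ, sum_range_succ (fun n => (-1 : PowerSeries ℚ)^n * (q^(s+1-n) * aa (s+1-n)) * bb n)]
  have h : ∀ n ∈ range (s+1),
      (-1 : PowerSeries ℚ)^n * (q^(2*(s+1-n)) * aa (s+1-n)) * bb n
        = ((-1 : PowerSeries ℚ)^n * (q^(s+1-n) * aa (s+1-n)) * bb n)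
          - q * ((-1 : PowerSeries ℚ)^n * (q^(s-n) * aa (s-n)) * bb n) := by
    intro n hn
    have hn' : n ≤ s := by simpa [Nat.lt_succ_iff] using hn
    have e1 : s+1-n = (s-n)+1 := by omega
    rw [e1, rel_a2 (s-n)]
    ring
  rw [sum_congr rfl h, sum_sub_distrib, mul_sum]
  simp only [Nat.sub_self, pow_zero, one_mul, Nat.mul_zero]
  ring

lemma cq (s : ℕ) : q^(2*(s+1)) * cc (s+1) = vv (s+1) + vv s := by
  unfold cc vv
  rw [mul_sum]
  rw [sum_range_succ' (fun n => q^(2*(s+1)) * ((-1 : PowerSeries ℚ)^n * aa (s+1-n) * bb n))]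
  rw [sum_range_succ' (fun n => (-1 : PowerSeries ℚ)^n * (q^(2*(s+1-n)) * aa (s+1-n)) * bb n)]
  have h : ∀ n ∈ range (s+1),
      q^(2*(s+1)) * ((-1 : PowerSeries ℚ)^(n+1) * aa (s+1-(n+1)) * bb (n+1))
        = ((-1 : PowerSeries ℚ)^(n+1) * (q^(2*(s+1-(n+1))) * aa (s+1-(n+1))) * bb (n+1))
          + ((-1 : PowerSeries ℚ)^n * (q^(2*(s-n)) * aa (s-n)) * bb n) := by
    intro n hn
    have hn' : n ≤ s := by simpa [Nat.lt_succ_iff] using hn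
    have e1 : s+1-(n+1) = s-n := by omega
    have e2 : 2*(s+1) = 2*(s-n) + 2*(n+1) := by omega
    rw [e1, e2, pow_add]
    linear_combination (q^(2*(s-n)) * (-1 : PowerSeries ℚ)^(n+1) * aa (s-n)) * rel_b n
  rw [sum_congr rfl h, sum_add_distrib]
  simp only [Nat.sub_zero, pow_zero, one_mul, Nat.mul_zero]
  ring

lemma ww_eq (s : ℕ) : ww (s+1+1) = dd (s+1+1) - dd s := by
  unfold ww dd
  have e0 : (s+1+1)/2 + 1 = (s/2+1)+1 := by omega
  rw [e0]
  rw [sum_range_succ' (fun M => (q^(4*M) * AA M) * (q^(s+1+1-2*M) * bb (s+1+1-2*M)))]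
  rw [sum_range_succ' (fun M => q^(s+1+1-2*M) * AA M * bb (s+1+1-2*M))]
  have h : ∀ M ∈ range (s/2+1),
      (q^(4*(M+1)) * AA (M+1)) * (q^(s+1+1-2*(M+1)) * bb (s+1+1-2*(M+1)))
        = (q^(s+1+1-2*(M+1)) * AA (M+1) * bb (s+1+1-2*(M+1)))
          - (q^(s-2*M) * AA M * bb (s-2*M)) := by
    intro M hM
    have e1 : s+1+1-2*(M+1) = s-2*M := by omega
    rw [e1, rel_A M]
    ring
  rw [sum_congr rfl h, sum_sub_distrib]
  simp only [Nat.mul_zero, pow_zero, one_mul, Nat.sub_zero]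
  ring

lemma dq (s : ℕ) : q^(2*(s+1)) * dd (s+1) = ww (s+1) - q * ww s := by
  unfold dd ww
  rw [mul_sum, mul_sum]
  have hterm : ∀ M ∈ range (s/2+1),
      q^(2*(s+1)) * (q^(s+1-2*M) * AA M * bb (s+1-2*M))
        = ((q^(4*M) * AA M) * (q^(s+1-2*M) * bb (s+1-2*M)))
          - q * ((q^(4*M) * AA M) * (q^(s-2*M) * bb (s-2*M))) := by
    intro M hM
    have hM' : 2*M ≤ s := by
      have := mem_range.mp hM; omega
    have e1 : s+1-2*M = (s-2*M)+1 := by omega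
    have e2 : 2*(s+1) = 4*M + 2*((s-2*M)+1) := by omega
    rw [e1, e2, pow_add]
    linear_combination (q^(4*M) * q^((s-2*M)+1) * AA M) * rel_b (s-2*M)
  rcases Nat.even_or_odd s with he | ho
  · have e0 : (s+1)/2 + 1 = s/2+1 := by rcases he with ⟨t, ht⟩; omega
    rw [e0, ← sum_sub_distrib]
    exact sum_congr rfl hterm
  · have e0 : (s+1)/2 + 1 = (s/2+1)+1 := by
      rcases ho with ⟨t, ht⟩; omega
    rw [e0]
    rw [sum_range_succ (fun M => q^(2*(s+1)) * (q^(s+1-2*M) * AA M * bb (s+1-2*M)))]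
    rw [sum_range_succ (fun M => (q^(4*M) * AA M) * (q^(s+1-2*M) * bb (s+1-2*M)))]
    have htop : q^(2*(s+1)) * (q^(s+1-2*(s/2+1)) * AA (s/2+1) * bb (s+1-2*(s/2+1)))
        = (q^(4*(s/2+1)) * AA (s/2+1)) * (q^(s+1-2*(s/2+1)) * bb (s+1-2*(s/2+1))) := by
      have e1 : s+1-2*(s/2+1) = 0 := by omega
      have e2 : 2*(s+1) = 4*(s/2+1) := by rcases ho with ⟨t, ht⟩; omega
      rw [e1, e2]
      ring
    rw [htop, sum_congr rfl hterm, sum_sub_distrib]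
    ring

-- explicit small pochhammers
lemma poch_q_1 : poch q q 1 = 1 - q := by
  simp [poch, Finset.prod_range_one]
lemma poch_q_2 : poch q q 2 = (1 - q) * (1 - q^2) := by
  rw [poch_succ, poch_q_1, pow_one, ← pow_two]
lemma poch_q2_1 : poch (q^2) (q^2) 1 = 1 - q^2 := by
  simp [poch, Finset.prod_range_one]
lemma poch_q2_2 : poch (q^2) (q^2) 2 = (1 - q^2) * (1 - q^4) := by
  rw [poch_succ, poch_q2_1, pow_one]
  congr 1
  rw [← pow_add]
lemma poch_q4_1 : poch (q^4) (q^4) 1 = 1 - q^4 := by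
  simp [poch, Finset.prod_range_one]

lemma r1 : aa 1 * (1 - q) = 1 := by
  unfold aa
  rw [poch_q_1]
  exact PowerSeries.inv_mul_cancel _ (by simp [constQ])
lemma r3 : aa 2 * ((1 - q) * (1 - q^2)) = 1 := by
  unfold aa
  rw [poch_q_2]
  exact PowerSeries.inv_mul_cancel _ (by simp [constQ])
lemma r2 : bb 1 * (1 - q^2) = 1 := by
  unfold bb
  rw [poch_q2_1]
  exact PowerSeries.inv_mul_cancel _ (by simp [constQ])
lemma r4 : bb 2 * ((1 - q^2) * (1 - q^4)) = 1 := by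
  unfold bb
  rw [poch_q2_2]
  exact PowerSeries.inv_mul_cancel _ (by simp [constQ])
lemma r5 : AA 1 * (1 - q^4) = 1 := by
  unfold AA
  rw [poch_q4_1]
  exact PowerSeries.inv_mul_cancel _ (by simp [constQ])

lemma nq1 : (1 - q : PowerSeries ℚ) ≠ 0 := by
  have := one_sub_pow_ne 1 one_pos; rwa [pow_one] at this
lemma nq2 : (1 - q^2 : PowerSeries ℚ) ≠ 0 := one_sub_pow_ne 2 (by norm_num)
lemma nq4 : (1 - q^4 : PowerSeries ℚ) ≠ 0 := one_sub_pow_ne 4 (by norm_num)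

lemma cd0 : cc 0 = dd 0 := by
  unfold cc dd
  simp [aa_zero, bb_zero, AA_zero]

lemma cd1 : cc 1 = dd 1 := by
  unfold cc dd
  rw [show (1:ℕ)/2 + 1 = 1 from rfl]
  rw [Finset.sum_range_succ, Finset.sum_range_one, Finset.sum_range_one]
  simp only [Nat.sub_self, Nat.sub_zero, pow_zero, pow_one, one_mul]
  rw [aa_zero, bb_zero, AA_zero]
  apply mul_right_cancel₀ (mul_ne_zero nq1 nq2)
  linear_combination (1 - q^2) * r1 - (1 - q^2) * r2

lemma cd2 : cc 2 = dd 2 := by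
  unfold cc dd
  rw [show (2:ℕ)/2 + 1 = 2 from rfl]
  rw [Finset.sum_range_succ, Finset.sum_range_succ, Finset.sum_range_one,
    Finset.sum_range_succ, Finset.sum_range_one]
  simp only [Nat.sub_self, Nat.sub_zero, pow_zero, pow_one, one_mul]
  rw [aa_zero, bb_zero, AA_zero]
  apply mul_right_cancel₀ (mul_ne_zero (mul_ne_zero nq1 nq2) nq4)
  linear_combination (1 - q^4) * r3 - (bb 1 * (1 - q^2) * (1 - q^4)) * r1
    - (1 - q^4) * r2 + ((1 - q) * (1 - q^2)) * r4 - ((1 - q) * (1 - q^2)) * r5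

lemma c_rec (s : ℕ) : q^(2*(s+1+1+1)) * cc (s+1+1+1)
    = cc (s+1+1+1) - q * cc (s+1+1) - cc (s+1) + q * cc s := by
  have h1 := cq (s+1+1)
  rw [vv_succ (s+1+1), vv_succ (s+1), uu_succ (s+1+1), uu_succ (s+1), uu_succ s] at h1
  rw [h1]; ring

lemma d_rec (s : ℕ) : q^(2*(s+1+1+1)) * dd (s+1+1+1)
    = dd (s+1+1+1) - q * dd (s+1+1) - dd (s+1) + q * dd s := by
  have h1 := dq (s+1+1)
  rw [ww_eq (s+1), ww_eq s] at h1
  rw [h1]; ring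

lemma cc_eq_dd : ∀ s, cc s = dd s := by
  intro s
  induction s using Nat.strong_induction_on with
  | _ s ih =>
    match s with
    | 0 => exact cd0
    | 1 => exact cd1
    | 2 => exact cd2
    | (t+3) =>
      show cc (t+1+1+1) = dd (t+1+1+1)
      have e1 : cc (t+1+1) = dd (t+1+1) := ih _ (by omega)
      have e2 : cc (t+1) = dd (t+1) := ih _ (by omega)
      have e3 : cc t = dd t := ih _ (by omega)
      have h : (cc (t+1+1+1) - dd (t+1+1+1)) * (1 - q^(2*(t+1+1+1))) = 0 := by
        have hc := c_rec t
        have hd := d_rec t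
        rw [e1, e2, e3] at hc
        linear_combination hd - hc
      rcases mul_eq_zero.mp h with h0 | h0
      · exact sub_eq_zero.mp h0
      · exact absurd h0 (one_sub_pow_ne _ (by omega))

-- choose arithmetic
lemma two_choose (m : ℕ) : 2 * (m+1).choose 2 = m * m + m := by
  rw [Nat.choose_two_right]
  have h2 : 2 ∣ (m+1) * m := by
    rcases Nat.even_or_odd m with ⟨t, ht⟩ | ⟨t, ht⟩
    · exact ⟨(m+1)*t, by subst ht; ring⟩
    · exact ⟨(t+1)*m, by subst ht; ring⟩
  have e0 : (m+1) - 1 = m := rfl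
  rw [e0]
  calc 2 * ((m+1) * m / 2) = (m+1) * m / 2 * 2 := by ring
    _ = (m+1) * m := Nat.div_mul_cancel h2
    _ = m * m + m := by ring

lemma expL (m n : ℕ) :
    2 * (m+1).choose 2 + 2 * (n+1).choose 2 + 2 * m * n + m + n
      = (m+n) * (m+n+2) := by
  rw [two_choose, two_choose]; ring

lemma expR (m n : ℕ) :
    8 * (m+1).choose 2 + 2 * (n+1).choose 2 + 4 * m * n + 2 * n
      = (2*m+n) * (2*m+n+2) + n := by
  have h8 : 8 * (m+1).choose 2 = 4 * (2 * (m+1).choose 2) := by ring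
  rw [h8, two_choose, two_choose]; ring

def fL : ℕ × ℕ → PowerSeries ℚ := fun p =>
  (-1 : PowerSeries ℚ) ^ p.2
    * q ^ (2 * (p.1+1).choose 2 + 2 * (p.2+1).choose 2 + 2 * p.1 * p.2 + p.1 + p.2)
    * (poch q q p.1)⁻¹ * (poch (q ^ 2) (q ^ 2) p.2)⁻¹

def fR : ℕ × ℕ → PowerSeries ℚ := fun p =>
  q ^ (8 * (p.1+1).choose 2 + 2 * (p.2+1).choose 2 + 4 * p.1 * p.2 + 2 * p.2)
    * (poch (q ^ 4) (q ^ 4) p.1)⁻¹ * (poch (q ^ 2) (q ^ 2) p.2)⁻¹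

lemma fL_eq (m n : ℕ) :
    fL (m, n) = q ^ ((m+n)*(m+n+2)) * ((-1 : PowerSeries ℚ)^n * aa m * bb n) := by
  unfold fL
  simp only
  rw [expL]
  unfold aa bb
  ring

lemma fR_eq (m n : ℕ) :
    fR (m, n) = q ^ ((2*m+n)*(2*m+n+2)) * (q^n * AA m * bb n) := by
  unfold fR
  simp only
  rw [expR, pow_add]
  unfold AA bb
  ring

lemma coeff_vanish (N e : ℕ) (u : PowerSeries ℚ) (h : N < e) :
    coeff (R := ℚ) N (q^e * u) = 0 := by
  rw [show (q : PowerSeries ℚ)^e = X^e from rfl, PowerSeries.coeff_X_pow_mul']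
  simp [Nat.not_le.mpr h]

lemma fiberL (s : ℕ) :
    ∑ n ∈ range (s+1), fL (s-n, n) = q^(s*(s+2)) * cc s := by
  unfold cc
  rw [mul_sum]
  apply sum_congr rfl
  intro n hn
  have hn' : n ≤ s := by simpa [Nat.lt_succ_iff] using hn
  rw [fL_eq]
  have e1 : (s-n) + n = s := by omega
  rw [e1]

lemma fiberR (s : ℕ) :
    ∑ M ∈ range (s/2+1), fR (M, s-2*M) = q^(s*(s+2)) * dd s := by
  unfold dd
  rw [mul_sum]
  apply sum_congr rfl
  intro M hM
  have hM' : 2*M ≤ s := by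
    have := mem_range.mp hM; omega
  rw [fR_eq]
  have e1 : 2*M + (s-2*M) = s := by omega
  rw [e1]

def TL (N : ℕ) : Finset (ℕ × ℕ) :=
  (range (N+1)).biUnion (fun s => (range (s+1)).image (fun n => (s-n, n)))

def TR (N : ℕ) : Finset (ℕ × ℕ) :=
  (range (N+1)).biUnion (fun s => (range (s/2+1)).image (fun M => (M, s-2*M)))

lemma mem_imgL {s : ℕ} {p : ℕ × ℕ} (h : p ∈ (range (s+1)).image (fun n => (s-n, n))) :
    p.1 + p.2 = s := by
  rcases Finset.mem_image.mp h with ⟨n, hn, he⟩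
  have hn' : n ≤ s := by simpa [Nat.lt_succ_iff] using hn
  rw [← he]; simp; omega

lemma mem_imgR {s : ℕ} {p : ℕ × ℕ} (h : p ∈ (range (s/2+1)).image (fun M => (M, s-2*M))) :
    2 * p.1 + p.2 = s := by
  rcases Finset.mem_image.mp h with ⟨M, hM, he⟩
  have hM' : 2*M ≤ s := by
    have := mem_range.mp hM; omega
  rw [← he]; simp; omega

lemma mem_TL {N : ℕ} {p : ℕ × ℕ} (h : p.1 + p.2 ≤ N) : p ∈ TL N := by
  apply Finset.mem_biUnion.mpr
  refine ⟨p.1 + p.2, mem_range.mpr (by omega), Finset.mem_image.mpr ⟨p.2, mem_range.mpr (by omega), ?_⟩⟩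
  ext <;> simp

lemma mem_TR {N : ℕ} {p : ℕ × ℕ} (h : 2 * p.1 + p.2 ≤ N) : p ∈ TR N := by
  apply Finset.mem_biUnion.mpr
  refine ⟨2*p.1 + p.2, mem_range.mpr (by omega), Finset.mem_image.mpr ⟨p.1, mem_range.mpr (by omega), ?_⟩⟩
  ext <;> simp

lemma disjL (N : ℕ) : Set.PairwiseDisjoint ↑(range (N+1))
    (fun s => (range (s+1)).image (fun n => (s-n, n))) := by
  intro s _ t _ hst
  simp only [Function.onFun]
  rw [Finset.disjoint_left]
  intro p hps hpt
  exact hst ((mem_imgL hps).symm.trans (mem_imgL hpt))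

lemma disjR (N : ℕ) : Set.PairwiseDisjoint ↑(range (N+1))
    (fun s => (range (s/2+1)).image (fun M => (M, s-2*M))) := by
  intro s _ t _ hst
  simp only [Function.onFun]
  rw [Finset.disjoint_left]
  intro p hps hpt
  exact hst ((mem_imgR hps).symm.trans (mem_imgR hpt))

def G : PowerSeries ℚ :=
  PowerSeries.mk fun N => ∑ s ∈ range (N+1), coeff (R := ℚ) N (q^(s*(s+2)) * cc s)

def G' : PowerSeries ℚ :=
  PowerSeries.mk fun N => ∑ s ∈ range (N+1), coeff (R := ℚ) N (q^(s*(s+2)) * dd s)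

lemma hasSum_L : HasSum fL G := by
  rw [hasSum_iff_coeff]
  intro N
  rw [G, PowerSeries.coeff_mk]
  have hvanish : ∀ p : ℕ × ℕ, p ∉ TL N → coeff (R := ℚ) N (fL p) = 0 := by
    intro p hp
    have hgt : N < p.1 + p.2 := by
      by_contra hle
      exact hp (mem_TL (Nat.not_lt.mp hle))
    have h2 : N < (p.1 + p.2) * (p.1 + p.2 + 2) := by
      calc N < p.1 + p.2 := hgt
        _ ≤ (p.1 + p.2) * (p.1 + p.2 + 2) := Nat.le_mul_of_pos_right _ (by omega)
    rw [← Prod.mk.eta (p := p), fL_eq]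
    exact coeff_vanish _ _ _ h2
  have h := hasSum_sum_of_ne_finset_zero (L := SummationFilter.unconditional _) hvanish
  convert h using 1
  unfold TL
  rw [Finset.sum_biUnion (disjL N)]
  apply sum_congr rfl
  intro s _
  rw [Finset.sum_image (by intro x _ y _ hxy; simpa using congrArg Prod.snd hxy)]
  rw [← map_sum, fiberL]

lemma hasSum_R : HasSum fR G' := by
  rw [hasSum_iff_coeff]
  intro N
  rw [G', PowerSeries.coeff_mk]
  have hvanish : ∀ p : ℕ × ℕ, p ∉ TR N → coeff (R := ℚ) N (fR p) = 0 := by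
    intro p hp
    have hgt : N < 2 * p.1 + p.2 := by
      by_contra hle
      exact hp (mem_TR (Nat.not_lt.mp hle))
    have h2 : N < (2 * p.1 + p.2) * (2 * p.1 + p.2 + 2) := by
      calc N < 2 * p.1 + p.2 := hgt
        _ ≤ (2 * p.1 + p.2) * (2 * p.1 + p.2 + 2) := Nat.le_mul_of_pos_right _ (by omega)
    rw [← Prod.mk.eta (p := p), fR_eq]
    exact coeff_vanish _ _ _ h2
  have h := hasSum_sum_of_ne_finset_zero (L := SummationFilter.unconditional _) hvanish
  convert h using 1
  unfold TR
  rw [Finset.sum_biUnion (disjR N)]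
  apply sum_congr rfl
  intro s _
  rw [Finset.sum_image (by intro x _ y _ hxy; simpa using congrArg Prod.fst hxy)]
  rw [← map_sum, fiberR]

lemma G_eq_G' : G = G' := by
  apply PowerSeries.ext
  intro N
  rw [G, G', PowerSeries.coeff_mk, PowerSeries.coeff_mk]
  exact sum_congr rfl (fun s _ => by rw [cc_eq_dd])


theorem alt_series_eq_positive_series :
    ∑' p : ℕ × ℕ,
        (-1 : PowerSeries ℚ) ^ p.2
          * q ^ (2 * (p.1+1).choose 2 + 2 * (p.2+1).choose 2 + 2 * p.1 * p.2
                  + p.1 + p.2)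
          * (poch q q p.1)⁻¹ * (poch (q ^ 2) (q ^ 2) p.2)⁻¹
      = ∑' p : ℕ × ℕ,
          q ^ (8 * (p.1+1).choose 2 + 2 * (p.2+1).choose 2 + 4 * p.1 * p.2
                + 2 * p.2)
            * (poch (q ^ 4) (q ^ 4) p.1)⁻¹ * (poch (q ^ 2) (q ^ 2) p.2)⁻¹ := by
  have e1 : (∑' p : ℕ × ℕ, fL p) = ∑' p : ℕ × ℕ, fR p :=
    hasSum_L.tsum_eq.trans (G_eq_G' ▸ hasSum_R.tsum_eq.symm)
  exact e1
end
end
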